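/- arXiv:2602.17746 — 4 statements merged into one kernel-verified Lean document; each statement's English description precedes it below -/
import Mathlib

section
/- Let p be a prime and let λ ∈ ℚ_p with λ ≠ 0 and λ ≠ 1. Let E_λ be the Weierstrass curve y² = x(x−1)(x−λ) over ℚ_p. If v_p(λ) ≠ 0, then Δ(E_λ) ≠ 0, j(E_λ) ≠ 0, and v_p(j(E_λ)) = 8·v_p(2) − 2·|v_p(λ)|. (In particular v_p(j(E_λ)) = −2·|v_p(λ)| for p odd, and = 8 − 2·|v_2(λ)| for p = 2.) -/
/-- The Legendre curve `y² = x(x-1)(x-λ)` as a Weierstrass curve. -/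
def LegendreCurve {R : Type*} [CommRing R] (lam : R) : WeierstrassCurve R :=
  { a₁ := 0, a₂ := -(lam + 1), a₃ := 0, a₄ := lam, a₆ := 0 }

section helpers

variable {p : ℕ} [Fact p.Prime]

lemma padic_val_neg (x : ℚ_[p]) : (-x).valuation = x.valuation := by
  rcases eq_or_ne x 0 with rfl | hx
  · simp
  · have h1 : ((-1 : ℤ) : ℚ_[p]) = -1 := by push_cast; ring
    have : (-x) = (-1 : ℚ_[p]) * x := by ring
    rw [this, Padic.valuation_mul (by norm_num) hx, ← h1, Padic.valuation_intCast]
    simp [padicValInt]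

lemma padic_val_inv (x : ℚ_[p]) (hx : x ≠ 0) : x⁻¹.valuation = -x.valuation := by
  have := Padic.valuation_mul hx (inv_ne_zero hx)
  rw [mul_inv_cancel₀ hx, Padic.valuation_one] at this
  linarith

lemma padic_val_pow (x : ℚ_[p]) (hx : x ≠ 0) (n : ℕ) :
    (x ^ n).valuation = n * x.valuation := by
  induction n with
  | zero => simp [Padic.valuation_one]
  | succ n ih =>
    rw [pow_succ, Padic.valuation_mul (pow_ne_zero _ hx) hx, ih]
    push_cast; ring

lemma padic_val_add {x y : ℚ_[p]} (hx : x ≠ 0) (hy : y ≠ 0)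
    (h : x.valuation < y.valuation) :
    x + y ≠ 0 ∧ (x + y).valuation = x.valuation := by
  have hne : x + y ≠ 0 := by
    intro hxy
    have hyx : y = -x := by linear_combination hxy
    rw [hyx, padic_val_neg] at h
    exact lt_irrefl _ h
  refine ⟨hne, le_antisymm ?_ ?_⟩
  · have hx' : (x + y) + (-y) ≠ 0 := by
      intro h'; apply hx; linear_combination h'
    have := Padic.le_valuation_add hx'
    have hxx : (x + y) + (-y) = x := by ring
    rw [hxx, padic_val_neg] at this
    rcases min_le_iff.mp this with h' | h'
    · exact h'
    · exact absurd h' (not_le.mpr h)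
  · have := Padic.le_valuation_add hne
    rw [min_eq_left h.le] at this
    exact this

end helpers

theorem stmt0 (p : ℕ) [Fact p.Prime] (lam : ℚ_[p]) (h0 : lam ≠ 0) (h1 : lam ≠ 1)
    (hv : lam.valuation ≠ 0) :
    (LegendreCurve lam).Δ ≠ 0 ∧
    (LegendreCurve lam).c₄ ^ 3 / (LegendreCurve lam).Δ ≠ 0 ∧
    ((LegendreCurve lam).c₄ ^ 3 / (LegendreCurve lam).Δ).valuation
      = 8 * (2 : ℚ_[p]).valuation - 2 * |lam.valuation| := by
  have h2 : (2 : ℚ_[p]) ≠ 0 := two_ne_zero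
  have hΔ : (LegendreCurve lam).Δ = 2 ^ 4 * (lam * (lam - 1)) ^ 2 := by
    simp only [LegendreCurve, WeierstrassCurve.Δ, WeierstrassCurve.b₂, WeierstrassCurve.b₄,
      WeierstrassCurve.b₆, WeierstrassCurve.b₈]
    ring
  have hc4 : (LegendreCurve lam).c₄ = 2 ^ 4 * (lam * (lam - 1) + 1) := by
    simp only [LegendreCurve, WeierstrassCurve.c₄, WeierstrassCurve.b₂, WeierstrassCurve.b₄]
    ring
  have hl1 : lam - 1 ≠ 0 := sub_ne_zero.mpr h1
  set v := lam.valuation with hvdef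
  -- valuations in the two cases
  have key : (lam - 1).valuation = (if 0 < v then 0 else v) ∧
      lam * (lam - 1) + 1 ≠ 0 ∧
      (lam * (lam - 1) + 1).valuation = (if 0 < v then 0 else 2 * v) := by
    have hvt : (lam * (lam - 1)).valuation = v + (lam - 1).valuation :=
      Padic.valuation_mul h0 hl1
    rcases lt_or_gt_of_ne hv with hneg | hpos
    · -- v < 0 : lam - 1 = lam + (-1)
      have hm1 : (lam - 1).valuation = v := by
        have := padic_val_add h0 (by norm_num : (-1 : ℚ_[p]) ≠ 0)
          (by rw [padic_val_neg, Padic.valuation_one]; exact hneg)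
        have e : lam + (-1) = lam - 1 := by ring
        rw [e] at this; exact this.2
      have ht : (lam * (lam - 1)).valuation = 2 * v := by rw [hvt, hm1]; ring
      have := padic_val_add (mul_ne_zero h0 hl1) (one_ne_zero)
        (by rw [ht, Padic.valuation_one]; linarith)
      simp only [if_neg (not_lt.mpr hneg.le)]
      exact ⟨hm1, this.1, by rw [this.2, ht]⟩
    · -- v > 0 : lam - 1 = -1 + lam
      have hm1 : (lam - 1).valuation = 0 := by
        have := padic_val_add (by norm_num : (-1 : ℚ_[p]) ≠ 0) h0
          (by rw [padic_val_neg, Padic.valuation_one]; exact hpos)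
        have e : (-1) + lam = lam - 1 := by ring
        rw [e] at this
        rw [this.2, padic_val_neg, Padic.valuation_one]
      have ht : (lam * (lam - 1)).valuation = v := by rw [hvt, hm1]; ring
      have := padic_val_add (one_ne_zero : (1 : ℚ_[p]) ≠ 0) (mul_ne_zero h0 hl1)
        (by rw [ht, Padic.valuation_one]; exact hpos)
      have e : (1 : ℚ_[p]) + lam * (lam - 1) = lam * (lam - 1) + 1 := by ring
      rw [e] at this
      simp only [if_pos hpos]
      exact ⟨hm1, this.1, by rw [this.2, Padic.valuation_one]⟩
  obtain ⟨hm1, hT0, hTv⟩ := key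
  have hΔ0 : (LegendreCurve lam).Δ ≠ 0 := by
    rw [hΔ]
    exact mul_ne_zero (pow_ne_zero _ h2) (pow_ne_zero _ (mul_ne_zero h0 hl1))
  have hc40 : (LegendreCurve lam).c₄ ≠ 0 := by
    rw [hc4]; exact mul_ne_zero (pow_ne_zero _ h2) hT0
  have hj0 : (LegendreCurve lam).c₄ ^ 3 / (LegendreCurve lam).Δ ≠ 0 :=
    div_ne_zero (pow_ne_zero _ hc40) hΔ0
  refine ⟨hΔ0, hj0, ?_⟩
  have hvc4 : (LegendreCurve lam).c₄.valuation = 4 * (2 : ℚ_[p]).valuation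
      + (lam * (lam - 1) + 1).valuation := by
    rw [hc4, Padic.valuation_mul (pow_ne_zero _ h2) hT0, padic_val_pow _ h2]
    push_cast; ring
  have hvΔ : (LegendreCurve lam).Δ.valuation = 4 * (2 : ℚ_[p]).valuation
      + 2 * (v + (lam - 1).valuation) := by
    rw [hΔ, Padic.valuation_mul (pow_ne_zero _ h2) (pow_ne_zero _ (mul_ne_zero h0 hl1)),
      padic_val_pow _ h2, padic_val_pow _ (mul_ne_zero h0 hl1),
      Padic.valuation_mul h0 hl1]
    push_cast; ring
  have hdiv : ((LegendreCurve lam).c₄ ^ 3 / (LegendreCurve lam).Δ).valuation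
      = 3 * (LegendreCurve lam).c₄.valuation - (LegendreCurve lam).Δ.valuation := by
    rw [div_eq_mul_inv, Padic.valuation_mul (pow_ne_zero _ hc40) (inv_ne_zero hΔ0),
      padic_val_pow _ hc40, padic_val_inv _ hΔ0]
    push_cast; ring
  rw [hdiv, hvc4, hvΔ, hTv, hm1]
  rcases lt_or_gt_of_ne hv with hneg | hpos
  · rw [if_neg (not_lt.mpr hneg.le), if_neg (not_lt.mpr hneg.le), abs_of_neg hneg]
    ring
  · rw [if_pos hpos, if_pos hpos, abs_of_pos hpos]
    ring
end

section
/- Let p be an odd prime, let ℓ be an odd prime, and let a, b ∈ ℚ_p be nonzero elements with a^ℓ + b^ℓ + 1 = 0. Set λ = −a^ℓ and let E_λ be the Weierstrass curve y² = x(x−1)(x−λ) over ℚ_p. Then Δ(E_λ) ≠ 0, and either v_p(Δ(E_λ)) = 0 (so the equation has good reduction at p), or j(E_λ) ≠ 0, v_p(j(E_λ)) < 0, and ℓ divides v_p(j(E_λ)). -/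
lemma LegendreCurve_Δ {R : Type*} [CommRing R] (lam : R) :
    (LegendreCurve lam).Δ = 16 * (lam * (lam - 1)) ^ 2 := by
  simp only [LegendreCurve, WeierstrassCurve.Δ, WeierstrassCurve.b₂, WeierstrassCurve.b₄,
    WeierstrassCurve.b₆, WeierstrassCurve.b₈]
  ring

lemma LegendreCurve_c₄ {R : Type*} [CommRing R] (lam : R) :
    (LegendreCurve lam).c₄ = 16 * (lam * (lam - 1) + 1) := by
  simp only [LegendreCurve, WeierstrassCurve.c₄, WeierstrassCurve.b₂, WeierstrassCurve.b₄]
  ring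

section PadicVal

variable {p : ℕ} [Fact p.Prime]

lemma padic_val_add_eq_left {x y : ℚ_[p]} (hx : x ≠ 0) (hy : y ≠ 0)
    (h : x.valuation < y.valuation) : (x + y).valuation = x.valuation := by
  have hxy : x + y ≠ 0 := by
    intro h0
    have hyx : y = -x := by linear_combination h0
    rw [hyx, padic_val_neg] at h
    exact lt_irrefl _ h
  have hle : x.valuation ≤ (x + y).valuation := by
    have := Padic.le_valuation_add (p := p) hxy
    omega
  have hge : (x + y).valuation ≤ x.valuation := by
    by_contra hcon
    push_neg at hcon
    have hx2 : (x + y) + (-y) = x := by ring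
    have h2 := Padic.le_valuation_add (x := x + y) (y := -y) (p := p) (by rw [hx2]; exact hx)
    rw [hx2, padic_val_neg] at h2
    omega
  omega

lemma padic_val_sixteen (hp : p ≠ 2) : ((16 : ℚ_[p])).valuation = 0 := by
  have hfact := (Fact.out : p.Prime)
  have hnd : ¬ p ∣ 16 := by
    intro hdvd
    have : p ∣ 2 := by
      have h16 : (16 : ℕ) = 2 ^ 4 := by norm_num
      rw [h16] at hdvd
      exact hfact.dvd_of_dvd_pow hdvd
    have h2 := Nat.le_of_dvd (by norm_num) this
    have h3 := hfact.two_le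
    omega
  rw [Padic.valuation_ofNat, padicValNat.eq_zero_of_not_dvd hnd]
  simp

end PadicVal

theorem stmt2 (p : ℕ) [Fact p.Prime] (hp : p ≠ 2)
    (ℓ : ℕ) (hℓ : ℓ.Prime) (hℓ2 : ℓ ≠ 2) (a b : ℚ_[p])
    (ha : a ≠ 0) (hb : b ≠ 0) (hab : a ^ ℓ + b ^ ℓ + 1 = 0) :
    (LegendreCurve (-a ^ ℓ)).Δ ≠ 0 ∧
    (((LegendreCurve (-a ^ ℓ)).Δ).valuation = 0 ∨
      ((LegendreCurve (-a ^ ℓ)).c₄ ^ 3 / (LegendreCurve (-a ^ ℓ)).Δ ≠ 0 ∧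
       ((LegendreCurve (-a ^ ℓ)).c₄ ^ 3 / (LegendreCurve (-a ^ ℓ)).Δ).valuation < 0 ∧
       (ℓ : ℤ) ∣ ((LegendreCurve (-a ^ ℓ)).c₄ ^ 3 / (LegendreCurve (-a ^ ℓ)).Δ).valuation)) := by
  set x : ℚ_[p] := a ^ ℓ * b ^ ℓ with hxdef
  have hx : x ≠ 0 := mul_ne_zero (pow_ne_zero _ ha) (pow_ne_zero _ hb)
  have h16 : (16 : ℚ_[p]) ≠ 0 := by norm_num
  have hprod : (-a ^ ℓ) * ((-a ^ ℓ) - 1) = -x := by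
    have hb' : b ^ ℓ = -a ^ ℓ - 1 := by linear_combination hab
    rw [hxdef, hb']; ring
  have hΔ : (LegendreCurve (-a ^ ℓ)).Δ = 16 * x ^ 2 := by
    rw [LegendreCurve_Δ, hprod]; ring
  have hc₄ : (LegendreCurve (-a ^ ℓ)).c₄ = 16 * (1 - x) := by
    rw [LegendreCurve_c₄, hprod]; ring
  have hΔne : (LegendreCurve (-a ^ ℓ)).Δ ≠ 0 := by
    rw [hΔ]; exact mul_ne_zero h16 (pow_ne_zero _ hx)
  refine ⟨hΔne, ?_⟩
  set t : ℤ := x.valuation with htdef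
  have hldvd : (ℓ : ℤ) ∣ t := by
    rw [htdef, hxdef, Padic.valuation_mul (pow_ne_zero _ ha) (pow_ne_zero _ hb),
      padic_val_pow a ha, padic_val_pow b hb]
    exact ⟨a.valuation + b.valuation, by ring⟩
  have hvΔ : ((LegendreCurve (-a ^ ℓ)).Δ).valuation = 2 * t := by
    rw [hΔ, Padic.valuation_mul h16 (pow_ne_zero _ hx), padic_val_sixteen hp,
      padic_val_pow x hx]
    push_cast; ring
  rcases eq_or_ne t 0 with ht0 | htne
  · left; rw [hvΔ, ht0]; ring
  · right
    have hx1 : (1 : ℚ_[p]) - x ≠ 0 := by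
      intro h0
      have : x = 1 := by linear_combination -h0
      rw [htdef, this, Padic.valuation_one] at htne
      exact htne rfl
    have hc₄ne : (LegendreCurve (-a ^ ℓ)).c₄ ≠ 0 := by
      rw [hc₄]; exact mul_ne_zero h16 hx1
    have hjne : (LegendreCurve (-a ^ ℓ)).c₄ ^ 3 / (LegendreCurve (-a ^ ℓ)).Δ ≠ 0 :=
      div_ne_zero (pow_ne_zero _ hc₄ne) hΔne
    have hvj : ((LegendreCurve (-a ^ ℓ)).c₄ ^ 3 / (LegendreCurve (-a ^ ℓ)).Δ).valuation
        = 3 * ((1 : ℚ_[p]) - x).valuation - 2 * t := by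
      rw [div_eq_mul_inv, Padic.valuation_mul (pow_ne_zero _ hc₄ne) (inv_ne_zero hΔne),
        padic_val_inv _ hΔne, hvΔ, padic_val_pow _ hc₄ne, hc₄,
        Padic.valuation_mul h16 hx1, padic_val_sixteen hp]
      push_cast; ring
    have hv1 : ((1 : ℚ_[p])).valuation = 0 := Padic.valuation_one
    rcases lt_or_gt_of_ne htne with htneg | htpos
    · -- t < 0 : v(1 - x) = t
      have hvx : ((1 : ℚ_[p]) - x).valuation = t := by
        have h1 : ((-x) + 1).valuation = (-x).valuation :=
          padic_val_add_eq_left (neg_ne_zero.mpr hx) one_ne_zero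
            (by rw [padic_val_neg, hv1]; omega)
      -- rewrite 1 - x = -x + 1
        have h2 : (1 : ℚ_[p]) - x = -x + 1 := by ring
        rw [h2, h1, padic_val_neg]
      refine ⟨hjne, ?_, ?_⟩
      · rw [hvj, hvx]; omega
      · rw [hvj, hvx]
        obtain ⟨c, hc⟩ := hldvd
        exact ⟨c, by omega⟩
    · -- t > 0 : v(1 - x) = 0
      have hvx : ((1 : ℚ_[p]) - x).valuation = 0 := by
        have h1 : ((1 : ℚ_[p]) + (-x)).valuation = (1 : ℚ_[p]).valuation :=
          padic_val_add_eq_left one_ne_zero (neg_ne_zero.mpr hx)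
            (by rw [padic_val_neg, hv1]; omega)
        have h2 : (1 : ℚ_[p]) - x = 1 + (-x) := by ring
        rw [h2, h1, hv1]
      refine ⟨hjne, ?_, ?_⟩
      · rw [hvj, hvx]; omega
      · rw [hvj, hvx]
        obtain ⟨c, hc⟩ := hldvd
        exact ⟨-2 * c, by rw [hc]; ring⟩
end

section
/- Let p and ℓ be primes and let K be a field extension of ℚ_p that is finitely generated as a field extension (there is a finite subset S ⊆ K such that the subfield generated by ℚ_p and S is all of K). Then the set of ℓ-power roots of unity in K, namely { x ∈ K : x^{ℓⁿ} = 1 for some n ∈ ℕ }, is finite. -/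
set_option linter.unusedSectionVars false
set_option maxHeartbeats 1000000
set_option synthInstance.maxHeartbeats 400000

open Polynomial IntermediateField

section Padic

variable {p : ℕ} [Fact p.Prime]

private lemma padic_norm_le_one_of_integral {q : ℚ_[p]} (hq : IsIntegral ℤ_[p] q) :
    ‖q‖ ≤ 1 := by
  obtain ⟨z, rfl⟩ := IsIntegrallyClosed.isIntegral_iff.mp hq
  exact z.2

private lemma padic_prime_div_p_sq_not_integral (ℓ : ℕ) (hℓ : ℓ.Prime) :
    ¬ IsIntegral ℤ_[p] ((ℓ : ℚ_[p]) / (p : ℚ_[p]) ^ 2) := by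
  have hp : p.Prime := Fact.out
  intro h
  have h1 := padic_norm_le_one_of_integral h
  have hplt : (1 : ℝ) < (p : ℝ) := by exact_mod_cast hp.one_lt
  have hppos : (0 : ℝ) < (p : ℝ) := by positivity
  have hnl : (p : ℝ)⁻¹ ≤ ‖(ℓ : ℚ_[p])‖ := by
    by_cases hlp : ℓ = p
    · subst hlp
      rw [Padic.norm_p]
    · have hnd : ¬ ((p : ℤ) ∣ (ℓ : ℤ)) := by
        intro hd
        exact hlp ((Nat.prime_dvd_prime_iff_eq hp hℓ).mp (Int.ofNat_dvd.mp hd)).symm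
      have : ¬ ‖((ℓ : ℤ) : ℚ_[p])‖ < 1 := fun hlt =>
        hnd ((Padic.norm_intCast_lt_one_iff (k := (ℓ : ℤ))).mp hlt)
      push_neg at this
      have h2 : (1 : ℝ) ≤ ‖(ℓ : ℚ_[p])‖ := by
        simpa using this
      calc (p : ℝ)⁻¹ ≤ 1 := by
            rw [inv_le_one_iff₀]; right; exact le_of_lt hplt
        _ ≤ ‖(ℓ : ℚ_[p])‖ := h2
  rw [norm_div, norm_pow, Padic.norm_p] at h1
  have hnorm_pos : (0:ℝ) < ((p:ℝ)⁻¹)^2 := by positivity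
  rw [div_le_one hnorm_pos] at h1
  have hle : (p : ℝ)⁻¹ ≤ ((p:ℝ)⁻¹)^2 := le_trans hnl h1
  have hinvpos : (0:ℝ) < (p:ℝ)⁻¹ := inv_pos.mpr hppos
  have h4 : (1:ℝ) ≤ (p:ℝ)⁻¹ := by
    have : (1:ℝ) * (p:ℝ)⁻¹ ≤ (p:ℝ)⁻¹ * (p:ℝ)⁻¹ := by nlinarith
    exact le_of_mul_le_mul_right (by linarith [this]) hinvpos
  have h5 := mul_le_mul_of_nonneg_left h4 hppos.le
  rw [mul_one, mul_inv_cancel₀ hppos.ne'] at h5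
  linarith

variable {L : Type*} [Field L] [Algebra ℚ_[p] L] [Algebra ℤ_[p] L]
  [IsScalarTower ℤ_[p] ℚ_[p] L]

private lemma integral_of_pow_eq_one {x : L} {m : ℕ} (hm : m ≠ 0) (h : x ^ m = 1) :
    IsIntegral ℤ_[p] x := by
  refine ⟨X ^ m - C 1, monic_X_pow_sub_C _ hm, ?_⟩
  simp [h]

private lemma padic_step (ℓ : ℕ) (hℓ : ℓ.Prime) (c : L) (hc : IsIntegral ℤ_[p] c)
    (ha : (p : L) ^ 2 * c ≠ 0) :
    ∃ c' : L, IsIntegral ℤ_[p] c' ∧ (1 + (p : L) ^ 2 * c) ^ ℓ = 1 + (p : L) ^ 2 * c' ∧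
      (p : L) ^ 2 * c' ≠ 0 := by
  classical
  set O := integralClosure ℤ_[p] L with hO
  have hmem : ∀ x : L, IsIntegral ℤ_[p] x ↔ x ∈ O := fun x => Iff.rfl
  set a : L := (p : L) ^ 2 * c with haDef
  have haO : a ∈ O := by
    refine O.mul_mem (O.pow_mem (O.natCast_mem p) 2) ((hmem c).mp hc)
  -- binomial expansion
  set w : L := ∑ k ∈ Finset.range ℓ, a ^ k * (ℓ.choose (k + 1) : L) with hwDef
  have hexp : (1 + a) ^ ℓ = 1 + a * w := by
    have h1 : (1 + a) ^ ℓ = (∑ k ∈ Finset.range ℓ, a ^ (k+1) * (ℓ.choose (k+1) : L)) + 1 := by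
      rw [add_comm (1:L) a, add_pow, Finset.sum_range_succ']
      simp only [pow_zero, one_mul, one_pow, mul_one, Nat.choose_zero_right, Nat.cast_one]
    have h2 : ∑ k ∈ Finset.range ℓ, a ^ (k+1) * (ℓ.choose (k+1) : L) = a * w := by
      rw [hwDef, Finset.mul_sum]
      exact Finset.sum_congr rfl fun k _ => by ring
    rw [h1, h2, add_comm]
  set t : L := ∑ k ∈ Finset.range (ℓ - 1), a ^ k * (ℓ.choose (k + 1 + 1) : L) with htDef
  have hwt : w = (ℓ : L) + a * t := by
    have hl : ℓ - 1 + 1 = ℓ := Nat.succ_pred_eq_of_pos hℓ.pos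
    have h1 : w = (∑ k ∈ Finset.range (ℓ-1), a ^ (k+1) * (ℓ.choose (k+1+1) : L)) + (ℓ : L) := by
      rw [hwDef, show Finset.range ℓ = Finset.range ((ℓ-1)+1) from by rw [hl],
        Finset.sum_range_succ']
      simp only [pow_zero, one_mul, zero_add, Nat.choose_one_right]
    have h2 : ∑ k ∈ Finset.range (ℓ-1), a ^ (k+1) * (ℓ.choose (k+1+1) : L) = a * t := by
      rw [htDef, Finset.mul_sum]
      exact Finset.sum_congr rfl fun k _ => by ring
    rw [h1, h2, add_comm]
  have htO : t ∈ O := by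
    refine O.sum_mem fun k _ => O.mul_mem (O.pow_mem haO k) (O.natCast_mem _)
  have hwO : w ∈ O := by
    refine O.sum_mem fun k _ => O.mul_mem (O.pow_mem haO k) (O.natCast_mem _)
  have hcw : c * w ∈ O := O.mul_mem ((hmem c).mp hc) hwO
  refine ⟨c * w, (hmem _).mpr hcw, ?_, ?_⟩
  · rw [hexp, haDef]; ring
  · -- nonvanishing
    have hw : w ≠ 0 := by
      intro hw0
      have hct : -(c * t) ∈ O := O.neg_mem (O.mul_mem ((hmem c).mp hc) htO)
      have heq : (ℓ : L) = (p : L) ^ 2 * (-(c * t)) := by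
        have : (0:L) = (ℓ : L) + a * t := by rw [← hwt, hw0]
        rw [haDef] at this
        linear_combination -this
      have hp2 : ((p : ℚ_[p]) ^ 2) ≠ 0 :=
        pow_ne_zero 2 (Nat.cast_ne_zero.mpr (Fact.out (p := p.Prime)).ne_zero)
      have hy : -(c * t) = algebraMap ℚ_[p] L ((ℓ : ℚ_[p]) / (p : ℚ_[p]) ^ 2) := by
        rw [map_div₀, map_pow, map_natCast, map_natCast]
        rw [eq_div_iff (by
          intro h0
          apply hp2
          have hinj : Function.Injective (algebraMap ℚ_[p] L) := (algebraMap ℚ_[p] L).injective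
          apply hinj
          rw [map_pow, map_natCast, h0, map_zero])]
        rw [heq]; ring
      have hint : IsIntegral ℤ_[p] ((ℓ : ℚ_[p]) / (p : ℚ_[p]) ^ 2) := by
        rw [← isIntegral_algebraMap_iff (algebraMap ℚ_[p] L).injective
          (R := ℤ_[p]) (x := (ℓ : ℚ_[p]) / (p : ℚ_[p]) ^ 2)]
        rw [← hy]
        exact (hmem _).mpr hct
      exact padic_prime_div_p_sq_not_integral ℓ hℓ hint
    intro h0
    have : a * w = 0 := by rw [haDef] at *; linear_combination h0
    rcases mul_eq_zero.mp this with h | h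
    · exact ha h
    · exact hw h

private lemma padic_pow_ne_one (ℓ : ℕ) (hℓ : ℓ.Prime) :
    ∀ (m : ℕ) (c : L), IsIntegral ℤ_[p] c → (p : L) ^ 2 * c ≠ 0 →
      (1 + (p : L) ^ 2 * c) ^ ℓ ^ m ≠ 1 := by
  intro m
  induction m with
  | zero =>
    intro c _ hne h
    rw [pow_zero, pow_one] at h
    exact hne (by linear_combination h)
  | succ m ih =>
    intro c hc hne h
    obtain ⟨c', hc', heq, hne'⟩ := padic_step ℓ hℓ c hc hne
    rw [show ℓ ^ (m + 1) = ℓ * ℓ ^ m by ring, pow_mul, heq] at h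
    exact ih c' hc' hne' h

private lemma padic_roots_eq_of_congruent (ℓ : ℕ) (hℓ : ℓ.Prime) {n : ℕ} {ζ ξ : L}
    (hζ : ζ ^ ℓ ^ n = 1) (hξ : ξ ^ ℓ ^ n = 1) {c : L} (hc : IsIntegral ℤ_[p] c)
    (hd : ζ - ξ = (p : L) ^ 2 * c) : ζ = ξ := by
  have hpos : 0 < ℓ ^ n := pow_pos hℓ.pos n
  set ξpow : L := ξ ^ (ℓ ^ n - 1) with hxp
  have hinv : ξpow * ξ = 1 := by
    rw [hxp, ← pow_succ, Nat.sub_add_cancel hpos, hξ]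
  set u : L := ζ * ξpow with hu
  have h1 : u = 1 + (p : L) ^ 2 * (c * ξpow) := by
    have hz : ζ = ξ + (p : L) ^ 2 * c := by linear_combination hd
    rw [hu]
    linear_combination ξpow * hz + hinv
  have hupow : u ^ ℓ ^ n = 1 := by
    rw [hu, mul_pow, hζ, one_mul, hxp, ← pow_mul, mul_comm (ℓ ^ n - 1) (ℓ ^ n), pow_mul, hξ,
      one_pow]
  have hxint : IsIntegral ℤ_[p] ξ := integral_of_pow_eq_one hpos.ne' hξ
  have hxpint : IsIntegral ℤ_[p] ξpow := hxint.pow _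
  have hcx : IsIntegral ℤ_[p] (c * ξpow) := hc.mul hxpint
  by_cases hz : (p : L) ^ 2 * (c * ξpow) = 0
  · have hu1 : u = 1 := by rw [h1, hz, add_zero]
    have : ζ = u * ξ := by
      rw [hu]
      calc ζ = ζ * (ξpow * ξ) := by rw [hinv, mul_one]
        _ = ζ * ξpow * ξ := by ring
    rw [this, hu1, one_mul]
  · exact absurd (h1 ▸ hupow) (padic_pow_ne_one ℓ hℓ n (c * ξpow) hcx hz)

end Padic

section Bound

variable {p : ℕ} [Fact p.Prime]

/-- In a finite extension of `ℚ_p`, every `ℓ`-power root of unity has its exponent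
bounded in terms of the degree. -/
private lemma padic_root_of_unity_bound (ℓ : ℕ) (hℓ : ℓ.Prime)
    (L : Type*) [Field L] [Algebra ℚ_[p] L] [FiniteDimensional ℚ_[p] L]
    {ζ : L} {n : ℕ} (hζ : ζ ^ ℓ ^ n = 1) :
    ζ ^ ℓ ^ (p ^ (2 * Module.finrank ℚ_[p] L)) = 1 := by
  classical
  have hp : p.Prime := Fact.out
  letI : Algebra ℤ_[p] L := ((algebraMap ℚ_[p] L).comp (algebraMap ℤ_[p] ℚ_[p])).toAlgebra
  haveI : IsScalarTower ℤ_[p] ℚ_[p] L := IsScalarTower.of_algebraMap_eq fun x => rfl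
  haveI : CharZero L := charZero_of_injective_algebraMap (algebraMap ℚ_[p] L).injective
  set d := Module.finrank ℚ_[p] L with hd
  set O := integralClosure ℤ_[p] L with hO
  haveI : IsNoetherian ℤ_[p] ↥O := IsIntegralClosure.isNoetherian ℤ_[p] ℚ_[p] L ↥O
  haveI : Module.Finite ℤ_[p] ↥O := ⟨IsNoetherian.noetherian ⊤⟩
  have hinjZL : Function.Injective (algebraMap ℤ_[p] L) := by
    rw [IsScalarTower.algebraMap_eq ℤ_[p] ℚ_[p] L]
    exact (algebraMap ℚ_[p] L).injective.comp (fun x y hxy => Subtype.ext hxy)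
  haveI : Module.IsTorsionFree ℤ_[p] ↥O := by
    refine Module.isTorsionFree_iff_algebraMap_injective.mpr ?_
    intro x y hxy
    apply hinjZL
    have : algebraMap ℤ_[p] L x = ((algebraMap ℤ_[p] ↥O x : ↥O) : L) := rfl
    rw [this, hxy]; rfl
  haveI : Module.Free ℤ_[p] ↥O := Module.free_of_finite_type_torsion_free'
  set ι := Module.Free.ChooseBasisIndex ℤ_[p] ↥O with hι
  set b : Module.Basis ι ℤ_[p] ↥O := Module.Free.chooseBasis ℤ_[p] ↥O with hb
  -- card ι ≤ d
  have hcard : Fintype.card ι ≤ d := by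
    have h1 : LinearIndependent ℤ_[p] (fun i => ((b i : ↥O) : L)) := by
      have := b.linearIndependent
      have hker : LinearMap.ker (O.val.toLinearMap.restrictScalars ℤ_[p]) = ⊥ := by
        rw [LinearMap.ker_eq_bot]
        exact fun x y hxy => Subtype.ext hxy
      exact this.map' (O.val.toLinearMap.restrictScalars ℤ_[p]) hker
    have h2 : LinearIndependent ℚ_[p] (fun i => ((b i : ↥O) : L)) :=
      (LinearIndependent.iff_fractionRing ℤ_[p] ℚ_[p]).mp h1
    exact h2.fintype_card_le_finrank
  -- ζ and its powers are integral
  have hnpos : (0:ℕ) < ℓ ^ n := pow_pos hℓ.pos n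
  have hζint : ζ ∈ O := integral_of_pow_eq_one hnpos.ne' hζ
  set ζO : ↥O := ⟨ζ, hζint⟩ with hζO
  have hfin : IsOfFinOrder ζ := isOfFinOrder_iff_pow_eq_one.mpr ⟨ℓ ^ n, hnpos, hζ⟩
  set k := orderOf ζ with hk
  have hkpos : 0 < k := hfin.orderOf_pos
  -- the injection into (ι → ZMod (p^2))
  have hkbound : k ≤ p ^ (2 * d) := by
    have hinj : Function.Injective
        (fun m : Fin k => fun i : ι => PadicInt.toZModPow 2 (b.repr (ζO ^ (m : ℕ)) i)) := by
      intro m₁ m₂ hmm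
      have hdiff : ∀ i : ι, ∃ t : ℤ_[p],
          b.repr (ζO ^ (m₁ : ℕ)) i - b.repr (ζO ^ (m₂ : ℕ)) i = (p : ℤ_[p]) ^ 2 * t := by
        intro i
        have : PadicInt.toZModPow 2 (b.repr (ζO ^ (m₁ : ℕ)) i) =
            PadicInt.toZModPow 2 (b.repr (ζO ^ (m₂ : ℕ)) i) := congrFun hmm i
        have hker : b.repr (ζO ^ (m₁ : ℕ)) i - b.repr (ζO ^ (m₂ : ℕ)) i ∈
            RingHom.ker (PadicInt.toZModPow (p := p) 2) := by
          rw [RingHom.mem_ker, map_sub, this, sub_self]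
        rw [PadicInt.ker_toZModPow, Ideal.mem_span_singleton] at hker
        obtain ⟨t, ht⟩ := hker
        exact ⟨t, ht⟩
      choose t ht using hdiff
      have hsub : ζO ^ (m₁ : ℕ) - ζO ^ (m₂ : ℕ) = (p : ℤ_[p]) ^ 2 • (∑ i : ι, t i • b i) := by
        have h1 : ζO ^ (m₁ : ℕ) - ζO ^ (m₂ : ℕ) =
            ∑ i : ι, (b.repr (ζO ^ (m₁ : ℕ)) i - b.repr (ζO ^ (m₂ : ℕ)) i) • b i :=
          calc ζO ^ (m₁ : ℕ) - ζO ^ (m₂ : ℕ)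
              = (∑ i : ι, b.repr (ζO ^ (m₁ : ℕ)) i • b i) -
                (∑ i : ι, b.repr (ζO ^ (m₂ : ℕ)) i • b i) := by
                rw [b.sum_repr, b.sum_repr]
            _ = ∑ i : ι, (b.repr (ζO ^ (m₁ : ℕ)) i - b.repr (ζO ^ (m₂ : ℕ)) i) • b i := by
                rw [← Finset.sum_sub_distrib]
                exact Finset.sum_congr rfl fun i _ => (sub_smul _ _ _).symm
        rw [h1, Finset.smul_sum]
        refine Finset.sum_congr rfl fun i _ => ?_
        rw [ht i, mul_smul]
      have hLdiff : (ζ ^ (m₁ : ℕ) - ζ ^ (m₂ : ℕ) : L) =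
          (p : L) ^ 2 * ((∑ i : ι, t i • b i : ↥O) : L) := by
        have hcoe : ((ζO ^ (m₁ : ℕ) - ζO ^ (m₂ : ℕ) : ↥O) : L) =
            (((p : ℤ_[p]) ^ 2 • (∑ i : ι, t i • b i) : ↥O) : L) :=
          congrArg (fun z : ↥O => (z : L)) hsub
        have h1 : ((ζO ^ (m₁ : ℕ) - ζO ^ (m₂ : ℕ) : ↥O) : L) =
            ζ ^ (m₁ : ℕ) - ζ ^ (m₂ : ℕ) := by
          simp [hζO]
        have h2 : (((p : ℤ_[p]) ^ 2 • (∑ i : ι, t i • b i) : ↥O) : L) =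
            algebraMap ℤ_[p] L ((p : ℤ_[p]) ^ 2) * ((∑ i : ι, t i • b i : ↥O) : L) := by
          rw [SetLike.val_smul, Algebra.smul_def]
        rw [h1, h2] at hcoe
        rw [hcoe, map_pow, map_natCast]
      have hpow1 : (ζ ^ (m₁ : ℕ)) ^ ℓ ^ n = 1 := by
        rw [← pow_mul, mul_comm, pow_mul, hζ, one_pow]
      have hpow2 : (ζ ^ (m₂ : ℕ)) ^ ℓ ^ n = 1 := by
        rw [← pow_mul, mul_comm, pow_mul, hζ, one_pow]
      have hcint : IsIntegral ℤ_[p] ((∑ i : ι, t i • b i : ↥O) : L) :=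
        (∑ i : ι, t i • b i : ↥O).2
      have heq : ζ ^ (m₁ : ℕ) = ζ ^ (m₂ : ℕ) :=
        padic_roots_eq_of_congruent ℓ hℓ hpow1 hpow2 hcint hLdiff
      have := pow_injOn_Iio_orderOf (x := ζ) (Set.mem_Iio.mpr m₁.2) (Set.mem_Iio.mpr m₂.2) heq
      exact Fin.ext this
    have := Fintype.card_le_of_injective _ hinj
    rw [Fintype.card_fin, Fintype.card_fun, ZMod.card] at this
    calc k ≤ (p ^ 2) ^ Fintype.card ι := this
      _ ≤ (p ^ 2) ^ d := Nat.pow_le_pow_right (Nat.one_le_pow 2 p hp.pos) hcard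
      _ = p ^ (2 * d) := by rw [← pow_mul]
  -- finish
  obtain ⟨j, hj, hkj⟩ := (Nat.dvd_prime_pow hℓ).mp (orderOf_dvd_of_pow_eq_one hζ)
  have hjN : j ≤ p ^ (2 * d) := by
    have h1 : j < 2 ^ j := Nat.lt_two_pow_self
    have h2 : 2 ^ j ≤ ℓ ^ j := Nat.pow_le_pow_left hℓ.two_le j
    have h3 : ℓ ^ j ≤ p ^ (2 * d) := hkj ▸ hkbound
    omega
  exact orderOf_dvd_iff_pow_eq_one.mp (hkj ▸ pow_dvd_pow ℓ hjN)

end Bound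

section Transcendence

/-- An element of a purely transcendental extension that is integral over the base field
lies in the base field. -/
private lemma integral_mem_adjoin_algebraicIndependent
    {F E : Type*} [Field F] [Field E] [Algebra F E] {ι : Type*} {x : ι → E}
    (hx : AlgebraicIndependent F x) {c : E}
    (hc : c ∈ IntermediateField.adjoin F (Set.range x)) (hci : IsIntegral F c) :
    ∃ e : F, algebraMap F E e = c := by
  classical
  set A := MvPolynomial ι F with hA
  set M := IntermediateField.adjoin F (Set.range x) with hM
  set c' : ↥M := ⟨c, hc⟩ with hc'
  have hcM : IsIntegral F c' := by
    rw [← isIntegral_algebraMap_iff (algebraMap (↥M) E).injective (R := F) (x := c')]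
    exact hci
  haveI : IsIntegrallyClosed A := inferInstance
  set cc := hx.aevalEquivField.symm c' with hcc
  have hccint : IsIntegral F cc := hcM.map hx.aevalEquivField.symm
  have hccA : IsIntegral A cc := hccint.tower_top
  obtain ⟨a, ha⟩ := IsIntegrallyClosed.isIntegral_iff.mp hccA
  have hca : c = MvPolynomial.aeval x a := by
    have h1 : hx.aevalEquivField (algebraMap A (FractionRing A) a) = c' := by
      rw [ha, hcc, AlgEquiv.apply_symm_apply]
    have h2 := hx.aevalEquivField_algebraMap_apply_coe a
    rw [h1] at h2
    exact h2
  -- evaluation trick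
  have hinj : Function.Injective (MvPolynomial.aeval (R := F) x) :=
    algebraicIndependent_iff_injective_aeval.mp hx
  have h0 : Polynomial.aeval a (minpoly F c) = 0 := by
    apply hinj
    rw [map_zero, ← Polynomial.aeval_algHom_apply, ← hca, minpoly.aeval]
  set e : F := MvPolynomial.aeval (fun _ : ι => (0 : F)) a with he
  have hroot : (minpoly F c).IsRoot e := by
    have h1 : Polynomial.aeval e (minpoly F c) = 0 := by
      rw [he, Polynomial.aeval_algHom_apply, h0, map_zero]
    simpa [Polynomial.IsRoot, ← Polynomial.aeval_def] using h1
  obtain ⟨q, hq⟩ := Polynomial.dvd_iff_isRoot.mpr hroot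
  have hirr := minpoly.irreducible hci
  rcases hirr.isUnit_or_isUnit hq with hu | hu
  · exact absurd hu (Polynomial.not_isUnit_X_sub_C e)
  · obtain ⟨r, hr, hrq⟩ := Polynomial.isUnit_iff.mp hu
    refine ⟨e, ?_⟩
    have haev : Polynomial.aeval c (minpoly F c) = 0 := minpoly.aeval F c
    rw [hq, ← hrq, map_mul] at haev
    simp only [map_sub, Polynomial.aeval_X, Polynomial.aeval_C] at haev
    rcases mul_eq_zero.mp haev with h | h
    · linear_combination -h
    · exfalso
      have : algebraMap F E r ≠ 0 := by
        intro h0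
        exact hr.ne_zero ((algebraMap F E).injective (by rw [h0, map_zero]))
      exact this h
end Transcendence

theorem stmt8 (p ℓ : ℕ) [Fact p.Prime] (hℓ : ℓ.Prime)
    (K : Type*) [Field K] [Algebra ℚ_[p] K]
    (hfg : ∃ S : Finset K, IntermediateField.adjoin ℚ_[p] (S : Set K) = ⊤) :
    {x : K | ∃ n : ℕ, x ^ ℓ ^ n = 1}.Finite := by
  classical
  obtain ⟨S, hS⟩ := hfg
  -- a maximal algebraically independent subset of S
  obtain ⟨u, -, hu⟩ := exists_maximal_algebraicIndependent (∅ : Set K) (↑S : Set K)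
    (Set.empty_subset _) (algebraicIndependent_empty (K := ℚ_[p]) (A := K))
  have huAI : AlgebraicIndependent ℚ_[p] ((↑) : u → K) := hu.prop.1
  set M := IntermediateField.adjoin ℚ_[p] u with hM
  -- every element of S is integral over M
  have hSalg : ∀ x ∈ (↑S : Set K), IsIntegral M x := by
    intro x hx
    by_cases hxu : x ∈ u
    · have : x ∈ M := IntermediateField.subset_adjoin _ _ hxu
      have : x = algebraMap M K ⟨x, this⟩ := rfl
      rw [this]
      exact isIntegral_algebraMap
    · have hdep : ¬ AlgebraicIndependent ℚ_[p] ((↑) : ↥(insert x u) → K) := by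
        intro h
        exact hxu (hu.2 ⟨h, Set.insert_subset hx hu.prop.2⟩ (Set.subset_insert x u)
          (Set.mem_insert x u))
      have hopt : ¬ AlgebraicIndependent ℚ_[p] (fun o : Option ↥u => o.elim x ((↑) : u → K)) := by
        intro h
        apply hdep
        have hcomp := h.comp (Set.subtypeInsertEquivOption hxu) (Equiv.injective _)
        convert hcomp
        ext y
        by_cases hy : (y : K) = x <;> simp [Set.subtypeInsertEquivOption, hy]
      have halg : IsAlgebraic (↥(Algebra.adjoin ℚ_[p] (Set.range ((↑) : u → K)))) x := by
        rw [huAI.option_iff_transcendental x] at hopt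
        exact not_not.mp hopt
      have halg2 : IsAlgebraic (↥M.toSubalgebra) x := by
        refine halg.tower_top_of_subalgebra_le ?_
        rw [Subtype.range_coe]
        exact IntermediateField.algebra_adjoin_le_adjoin ℚ_[p] u
      exact (halg2 : IsAlgebraic (↥M) x).isIntegral
  -- K is finite dimensional over M
  have htop : IntermediateField.adjoin M (↑S : Set K) = ⊤ := by
    rw [eq_top_iff]
    intro y _
    have h1 : IntermediateField.adjoin ℚ_[p] (↑S : Set K) ≤
        (IntermediateField.adjoin M (↑S : Set K)).restrictScalars ℚ_[p] :=
      IntermediateField.adjoin_le_iff.mpr (IntermediateField.subset_adjoin _ _)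
    have h2 : y ∈ IntermediateField.adjoin ℚ_[p] (↑S : Set K) := by rw [hS]; trivial
    exact h1 h2
  haveI : FiniteDimensional M K := by
    haveI : Finite (↑(↑S : Set K)) := S.finite_toSet.to_subtype
    haveI : FiniteDimensional M (IntermediateField.adjoin M (↑S : Set K)) :=
      IntermediateField.finiteDimensional_adjoin hSalg
    rw [htop] at this
    exact (IntermediateField.topEquiv (F := M) (E := K)).toLinearEquiv.finiteDimensional
  set d := Module.finrank M K with hd
  -- every element of our set has exponent bound
  have key : ∀ ζ ∈ {x : K | ∃ n : ℕ, x ^ ℓ ^ n = 1},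
      ζ ^ ℓ ^ (p ^ (2 * d)) = 1 := by
    rintro ζ ⟨n, hn⟩
    have hnpos : (0:ℕ) < ℓ ^ n := pow_pos hℓ.pos n
    have hint : IsIntegral ℚ_[p] ζ := by
      refine ⟨X ^ ℓ ^ n - C 1, monic_X_pow_sub_C _ hnpos.ne', ?_⟩
      simp [hn]
    -- degree bound : [ℚ_p(ζ) : ℚ_p] ≤ d
    haveI : FiniteDimensional ℚ_[p] ℚ_[p]⟮ζ⟯ := IntermediateField.adjoin.finiteDimensional hint
    have hMint : IsIntegral M ζ := IsIntegral.of_finite M ζ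
    have hdeg : Module.finrank ℚ_[p] ℚ_[p]⟮ζ⟯ ≤ d := by
      rw [IntermediateField.adjoin.finrank hint]
      set g := minpoly M ζ with hg
      have hdvd : g ∣ (minpoly ℚ_[p] ζ).map (algebraMap ℚ_[p] M) :=
        minpoly.dvd_map_of_isScalarTower ℚ_[p] M ζ
      have hlift : g ∈ Polynomial.lifts (algebraMap (↥(integralClosure ℚ_[p] (↥M))) M) :=
        integralClosure.mem_lifts_of_monic_of_dvd_map (↥M) (minpoly.monic hint)
          (minpoly.monic hMint) hdvd
      have hcoeff : ∀ i : ℕ, g.coeff i ∈ Set.range (algebraMap ℚ_[p] (↥M)) := by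
        intro i
        have h1 := (Polynomial.lifts_iff_coeff_lifts g).mp hlift i
        obtain ⟨y, hy⟩ := h1
        have hyint : IsIntegral ℚ_[p] ((y : ↥M) : K) := by
          have : IsIntegral ℚ_[p] (y : ↥M) := y.2
          exact this.map (IsScalarTower.toAlgHom ℚ_[p] (↥M) K)
        have hymem : ((y : ↥M) : K) ∈ IntermediateField.adjoin ℚ_[p]
            (Set.range ((↑) : u → K)) := by
          rw [Subtype.range_coe]
          exact (y : ↥M).2
        obtain ⟨e, he⟩ := integral_mem_adjoin_algebraicIndependent huAI hymem hyint
        refine ⟨e, ?_⟩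
        have : algebraMap ℚ_[p] K e = ((algebraMap ℚ_[p] (↥M) e : ↥M) : K) :=
          IsScalarTower.algebraMap_apply ℚ_[p] (↥M) K e
        rw [← hy]
        apply Subtype.ext
        rw [← this, he]
        rfl
      have hmemlift : g ∈ Polynomial.lifts (algebraMap ℚ_[p] (↥M)) :=
        (Polynomial.lifts_iff_coeff_lifts g).mpr hcoeff
      obtain ⟨q, hq⟩ := (Polynomial.mem_lifts g).mp hmemlift
      have hq0 : q ≠ 0 := by
        intro h
        apply minpoly.ne_zero hMint
        rw [← hg, ← hq, h, Polynomial.map_zero]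
      have haev : Polynomial.aeval ζ q = 0 := by
        have : Polynomial.aeval ζ (q.map (algebraMap ℚ_[p] M)) = 0 := by
          rw [hq]
          exact minpoly.aeval M ζ
        rwa [Polynomial.aeval_map_algebraMap] at this
      have hdle : (minpoly ℚ_[p] ζ).natDegree ≤ q.natDegree :=
        Polynomial.natDegree_le_natDegree (minpoly.degree_le_of_ne_zero ℚ_[p] ζ hq0 haev)
      have hqg : q.natDegree = g.natDegree := by
        rw [← hq]
        exact (Polynomial.natDegree_map_eq_of_injective
          (algebraMap ℚ_[p] M).injective q).symm
      have hgd : g.natDegree = Module.finrank M M⟮ζ⟯ :=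
        (IntermediateField.adjoin.finrank hMint).symm
      have hfr : Module.finrank M M⟮ζ⟯ ≤ d := by
        rw [hd]
        exact M⟮ζ⟯.toSubalgebra.toSubmodule.finrank_le
      omega
    -- apply the local bound in ℚ_p(ζ)
    set ζ' : ℚ_[p]⟮ζ⟯ := IntermediateField.AdjoinSimple.gen ℚ_[p] ζ with hζ'
    have hζ'pow : ζ' ^ ℓ ^ n = 1 := by
      apply Subtype.ext
      push_cast
      exact hn
    have hbound := padic_root_of_unity_bound (p := p) ℓ hℓ (ℚ_[p]⟮ζ⟯) hζ'pow
    have hKbound : ζ ^ ℓ ^ (p ^ (2 * Module.finrank ℚ_[p] ℚ_[p]⟮ζ⟯)) = 1 := by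
      have := congrArg (Subtype.val : ℚ_[p]⟮ζ⟯ → K) hbound
      push_cast at this
      exact this
    -- increase the exponent
    have hexp : p ^ (2 * Module.finrank ℚ_[p] ℚ_[p]⟮ζ⟯) ≤ p ^ (2 * d) := by
      have hp : p.Prime := Fact.out
      exact Nat.pow_le_pow_right hp.pos (by omega)
    obtain ⟨m, hm⟩ := Nat.exists_eq_add_of_le hexp
    rw [hm, pow_add, pow_mul, hKbound, one_pow]
  -- conclude
  have hsubset : {x : K | ∃ n : ℕ, x ^ ℓ ^ n = 1} ⊆
      {x : K | ((X : K[X]) ^ ℓ ^ (p ^ (2 * d)) - C 1).IsRoot x} := by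
    intro x hx
    have := key x hx
    simp only [Set.mem_setOf_eq, Polynomial.IsRoot, Polynomial.eval_sub, Polynomial.eval_pow,
      Polynomial.eval_X, Polynomial.eval_C, sub_eq_zero]
    exact this
  refine Set.Finite.subset (Polynomial.finite_setOf_isRoot ?_) hsubset
  exact Polynomial.X_pow_sub_C_ne_zero (pow_pos hℓ.pos _) 1
end

section
/- Let G be a profinite group (a compact, Hausdorff, totally disconnected topological group) that is topologically finitely generated: there is a finite subset whose generated subgroup is dense in G. For m ≥ 1, let N_m denote the intersection of all open normal subgroups of G of index at most m. Then: (1) each N_m is an open normal subgroup of G; (2) N_m is stable under every topological group automorphism of G; and (3) the family (N_m)_{m ≥ 1} is cofinal among open subgroups: for every open subgroup U of G there exists m with N_m ≤ U. -/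
/-- The intersection of all open normal subgroups of index at most `m` of a topological
group `G`. -/
def boundedIndexIntersection (G : Type*) [Group G] [TopologicalSpace G] (m : ℕ) :
    Subgroup G :=
  ⨅ N ∈ {N : Subgroup G | N.Normal ∧ IsOpen (N : Set G) ∧ N.index ≤ m}, N

section Aux

variable {G : Type*} [Group G] [TopologicalSpace G] [IsTopologicalGroup G]

/-- An open subgroup containing a set with dense generated subgroup is the whole group. -/
lemma aux_eq_top {E : Subgroup G} (hE : IsOpen (E : Set G)) {S : Set G}
    (hd : Dense ((Subgroup.closure S : Subgroup G) : Set G)) (hs : S ⊆ E) : E = ⊤ := by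
  have h1 : (Subgroup.closure S : Subgroup G) ≤ E := (Subgroup.closure_le E).mpr hs
  have h2 : IsClosed (E : Set G) := Subgroup.isClosed_of_isOpen E hE
  have huniv : (Set.univ : Set G) ⊆ (E : Set G) := by
    rw [← hd.closure_eq]
    exact h2.closure_subset_iff.mpr h1
  exact (Subgroup.eq_top_iff' E).mpr fun x => huniv (Set.mem_univ x)

/-- In a compact topologically finitely generated group, there are only finitely many open
normal subgroups of index at most `m`. -/
lemma aux_finite [CompactSpace G]
    (hfg : ∃ S : Finset G, Dense ((Subgroup.closure (S : Set G) : Subgroup G) : Set G))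
    (m : ℕ) :
    {N : Subgroup G | N.Normal ∧ IsOpen (N : Set G) ∧ N.index ≤ m}.Finite := by
  obtain ⟨S, hS⟩ := hfg
  set 𝒮 := {N : Subgroup G | N.Normal ∧ IsOpen (N : Set G) ∧ N.index ≤ m} with h𝒮
  have key : ∀ N ∈ 𝒮, ∃ ψ : G →* Equiv.Perm (Fin m), ψ.ker = N := by
    rintro N ⟨hnorm, hopen, hidx⟩
    haveI : Finite (G ⧸ N) := N.quotient_finite_of_isOpen hopen
    have hcard : Nat.card (G ⧸ N) ≤ m := by
      rw [← Subgroup.index_eq_card]; exact hidx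
    have hpos : Nat.card (G ⧸ N) ≠ 0 :=
      Nat.card_ne_zero.mpr ⟨⟨(1 : G ⧸ N)⟩, inferInstance⟩
    let e : G ⧸ N ↪ Fin m := (Nat.equivFinOfCardPos hpos).toEmbedding.trans (Fin.castLEEmb hcard)
    let F : Equiv.Perm (G ⧸ N) →* Equiv.Perm (Fin m) := Equiv.Perm.viaEmbeddingHom e
    let C : G ⧸ N →* Equiv.Perm (G ⧸ N) := MulAction.toPermHom (G ⧸ N) (G ⧸ N)
    have hinj : Function.Injective (F.comp C) :=
      (Equiv.Perm.viaEmbeddingHom_injective e).comp MulAction.toPerm_injective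
    refine ⟨(F.comp C).comp (QuotientGroup.mk' N), ?_⟩
    rw [← MonoidHom.comap_ker, (F.comp C).ker_eq_bot_iff.mpr hinj, MonoidHom.comap_bot,
      QuotientGroup.ker_mk']
  choose ψ hψ using key
  rw [← Set.finite_coe_iff]
  refine Finite.of_injective (fun N : ↥𝒮 => fun s : ↥S => ψ N.1 N.2 s.1) ?_
  intro N₁ N₂ h
  have heq : ψ N₁.1 N₁.2 = ψ N₂.1 N₂.2 := by
    set E := MonoidHom.eqLocus (ψ N₁.1 N₁.2) (ψ N₂.1 N₂.2) with hE
    have hle : N₁.1 ⊓ N₂.1 ≤ E := by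
      intro g hg
      show ψ N₁.1 N₁.2 g = ψ N₂.1 N₂.2 g
      have h1 : g ∈ (ψ N₁.1 N₁.2).ker := by rw [hψ N₁.1 N₁.2]; exact hg.1
      have h2 : g ∈ (ψ N₂.1 N₂.2).ker := by rw [hψ N₂.1 N₂.2]; exact hg.2
      rw [MonoidHom.mem_ker] at h1 h2
      rw [h1, h2]
    have hopen : IsOpen ((N₁.1 ⊓ N₂.1 : Subgroup G) : Set G) := by
      rw [Subgroup.coe_inf]
      exact N₁.2.2.1.inter N₂.2.2.1
    have hEopen : IsOpen (E : Set G) := Subgroup.isOpen_mono hle hopen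
    have hStop : (S : Set G) ⊆ (E : Set G) := fun s hs => congrFun h ⟨s, hs⟩
    have htop : E = ⊤ := aux_eq_top hEopen hS hStop
    refine MonoidHom.ext fun g => ?_
    have hg : g ∈ E := htop ▸ Subgroup.mem_top g
    exact hg
  exact Subtype.ext (by rw [← hψ N₁.1 N₁.2, ← hψ N₂.1 N₂.2, heq])

end Aux

theorem stmt10 (G : Type*) [Group G] [TopologicalSpace G] [IsTopologicalGroup G]
    [CompactSpace G] [T2Space G] [TotallyDisconnectedSpace G]
    (hfg : ∃ S : Finset G, Dense ((Subgroup.closure (S : Set G) : Subgroup G) : Set G)) :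
    (∀ m : ℕ, 1 ≤ m →
      IsOpen ((boundedIndexIntersection G m : Subgroup G) : Set G) ∧
      (boundedIndexIntersection G m).Normal) ∧
    (∀ m : ℕ, 1 ≤ m → ∀ φ : G ≃* G, Continuous φ → Continuous φ.symm →
      Subgroup.map (φ : G →* G) (boundedIndexIntersection G m) = boundedIndexIntersection G m) ∧
    (∀ U : Subgroup G, IsOpen (U : Set G) → ∃ m : ℕ, 1 ≤ m ∧ boundedIndexIntersection G m ≤ U) := by
  have hmem : ∀ m (x : G), x ∈ boundedIndexIntersection G m ↔
      ∀ N : Subgroup G, N.Normal → IsOpen (N : Set G) → N.index ≤ m → x ∈ N := by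
    intro m x
    simp only [boundedIndexIntersection, Subgroup.mem_iInf, Set.mem_setOf_eq, and_imp]
  refine ⟨?_, ?_, ?_⟩
  · intro m _
    constructor
    · have hcoe : ((boundedIndexIntersection G m : Subgroup G) : Set G) =
          ⋂ N ∈ {N : Subgroup G | N.Normal ∧ IsOpen (N : Set G) ∧ N.index ≤ m}, (N : Set G) := by
        ext x
        simp only [SetLike.mem_coe, hmem m x, Set.mem_iInter, Set.mem_setOf_eq, and_imp]
      rw [hcoe]
      exact (aux_finite hfg m).isOpen_biInter fun N hN => hN.2.1
    · constructor
      intro n hn g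
      rw [hmem] at hn ⊢
      intro N h1 h2 h3
      exact h1.conj_mem n (hn N h1 h2 h3) g
  · intro m _ φ hφ hφs
    have key : ∀ (φ : G ≃* G), Continuous φ →
        boundedIndexIntersection G m ≤
          Subgroup.comap (φ : G →* G) (boundedIndexIntersection G m) := by
      intro φ hφ
      intro x hx
      rw [Subgroup.mem_comap, hmem]
      intro N h1 h2 h3
      rw [hmem] at hx
      have hmemN : x ∈ Subgroup.comap (φ : G →* G) N := by
        refine hx _ (h1.comap _) ?_ ?_
        · exact h2.preimage hφ
        · rw [Subgroup.index_comap_of_surjective _ φ.surjective]; exact h3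
      exact hmemN
    refine le_antisymm (Subgroup.map_le_iff_le_comap.mpr (key φ hφ)) ?_
    have h2 := key φ.symm hφs
    intro x hx
    have : φ.symm x ∈ boundedIndexIntersection G m := h2 hx
    exact ⟨φ.symm x, this, φ.apply_symm_apply x⟩
  · intro U hU
    haveI : Finite (G ⧸ U) := U.quotient_finite_of_isOpen hU
    haveI : U.FiniteIndex := U.finiteIndex_of_finite_quotient
    have hclosed : IsClosed (U.normalCore : Set G) :=
      U.normalCore_isClosed (Subgroup.isClosed_of_isOpen U hU)
    have hopen : IsOpen (U.normalCore : Set G) :=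
      Subgroup.isOpen_of_isClosed_of_finiteIndex _ hclosed
    refine ⟨U.normalCore.index, ?_, ?_⟩
    · exact Nat.one_le_iff_ne_zero.mpr Subgroup.FiniteIndex.index_ne_zero
    · intro x hx
      rw [hmem] at hx
      exact U.normalCore_le (hx U.normalCore inferInstance hopen le_rfl)
end
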